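/- Let f : F → C be a classifier on a finite product input space F = X_1 × ⋯ × X_n, let D̂ = (z¹, …, z^m) be a finite nonempty list of m points of F, and let D be the associated empirical distribution. Then for every S ⊆ {1,…,n}, either v^g_con(S) = 0 or v^g_con(S) ≥ 1/m². -/

import Mathlib

open Finset

open Classical in
/-- Conditional probability `Pr(A | B) = Pr(A ∩ B) / Pr(B)` over a finite space,
with mass function `P`. -/
noncomputable def condPr {F : Type*} [Fintype F] (P : F → ℝ) (A B : F → Prop) : ℝ :=
  (∑ z, if A z ∧ B z then P z else 0) / (∑ z, if B z then P z else 0)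

open Classical in
/-- The global contrastive value function
`v^g_con(S) = Σ_{x : P x > 0} P x · Pr_{z∼D}(f z ≠ f x | z_S̄ = x_S̄)`,
where `S̄ = {1,…,n} \ S`. -/
noncomputable def vgCon {n : ℕ} {X : Fin n → Type*} [∀ i, Fintype (X i)]
    {C : Type*} (f : (∀ i, X i) → C) (P : (∀ i, X i) → ℝ)
    (S : Finset (Fin n)) : ℝ :=
  ∑ x ∈ Finset.univ.filter (fun x => 0 < P x),
    P x * condPr P (fun z => f z ≠ f x) (fun z => ∀ i ∈ Sᶜ, z i = x i)

open Classical in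
/-- The empirical distribution of a dataset `d = (z¹, …, z^m)`:
`Pr(x) = (1/m) · #{j : z^j = x}`. -/
noncomputable def empiricalPMF {F : Type*} [Fintype F] {m : ℕ}
    (d : Fin m → F) : F → ℝ :=
  fun x => ((Finset.univ.filter (fun j => d j = x)).card : ℝ) / m

lemma sum_indicator_empirical {F : Type*} [Fintype F] {m : ℕ}
    (d : Fin m → F) (Q : F → Prop) [DecidablePred Q] :
    ∑ z, (if Q z then empiricalPMF d z else 0)
      = ((Finset.univ.filter (fun j => Q (d j))).card : ℝ) / m := by
  classical
  have h1 : ∀ z : F, empiricalPMF d z = ∑ j, (if d j = z then (1:ℝ)/m else 0) := by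
    intro z
    simp only [empiricalPMF]
    rw [Finset.card_filter]
    push_cast
    rw [Finset.sum_div]
    exact Finset.sum_congr rfl fun j _ => by split <;> simp
  have h2 : ((Finset.univ.filter (fun j => Q (d j))).card : ℝ) / m
      = ∑ j, (if Q (d j) then (1:ℝ)/m else 0) := by
    rw [Finset.card_filter]
    push_cast
    rw [Finset.sum_div]
    exact Finset.sum_congr rfl fun j _ => by split <;> simp
  rw [h2]
  calc ∑ z, (if Q z then empiricalPMF d z else 0)
      = ∑ z, ∑ j, (if d j = z then (if Q z then (1:ℝ)/m else 0) else 0) := by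
        refine Finset.sum_congr rfl fun z _ => ?_
        by_cases h : Q z
        · rw [if_pos h, h1 z]
          exact Finset.sum_congr rfl fun j _ => by
            by_cases hd : d j = z <;> simp [hd, h]
        · rw [if_neg h]
          symm
          exact Finset.sum_eq_zero fun j _ => by
            by_cases hd : d j = z <;> simp [hd, h]
    _ = ∑ j, ∑ z, (if d j = z then (if Q z then (1:ℝ)/m else 0) else 0) :=
        Finset.sum_comm
    _ = ∑ j, (if Q (d j) then (1:ℝ)/m else 0) := by
        refine Finset.sum_congr rfl fun j _ => ?_
        rw [Finset.sum_ite_eq Finset.univ (d j)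
          (fun z => if Q z then (1:ℝ)/m else 0)]
        simp

open Classical in
lemma condPr_empirical_bound {F : Type*} [Fintype F] {m : ℕ} (hm : 0 < m)
    (d : Fin m → F) (A B : F → Prop)
    (hne : condPr (empiricalPMF d) A B ≠ 0) :
    1 / (m:ℝ) ≤ condPr (empiricalPMF d) A B := by
  have hm' : (0:ℝ) < m := by exact_mod_cast hm
  have hnum := sum_indicator_empirical d (fun z => A z ∧ B z)
  have hden := sum_indicator_empirical d B
  set kN := (Finset.univ.filter (fun j => A (d j) ∧ B (d j))).card with hkN
  set kD := (Finset.univ.filter (fun j => B (d j))).card with hkD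
  have hc : condPr (empiricalPMF d) A B = ((kN:ℝ)/m) / ((kD:ℝ)/m) := by
    unfold condPr
    rw [hnum, hden]
  have hkN1 : 1 ≤ kN := by
    rcases Nat.eq_zero_or_pos kN with h | h
    · exact absurd (by rw [hc, h]; simp) hne
    · exact h
  have hsub : kN ≤ kD := by
    apply Finset.card_le_card
    exact Finset.monotone_filter_right _ (fun j _ hj => hj.2)
  have hkDm : kD ≤ m := by
    calc kD ≤ Finset.univ.card := Finset.card_filter_le _ _
      _ = m := by simp
  have hkD1 : 0 < kD := lt_of_lt_of_le hkN1 hsub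
  have hkD' : (0:ℝ) < kD := by exact_mod_cast hkD1
  have hc2 : condPr (empiricalPMF d) A B = (kN:ℝ)/kD := by
    rw [hc]
    field_simp
  rw [hc2, div_le_div_iff₀ hm' hkD']
  have h1 : (1:ℝ) ≤ kN := by exact_mod_cast hkN1
  have h2 : (kD:ℝ) ≤ m := by exact_mod_cast hkDm
  nlinarith

lemma empiricalPMF_pos_bound {F : Type*} [Fintype F] {m : ℕ} (hm : 0 < m)
    (d : Fin m → F) (x : F) (hx : 0 < empiricalPMF d x) :
    1 / (m:ℝ) ≤ empiricalPMF d x := by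
  classical
  have hm' : (0:ℝ) < m := by exact_mod_cast hm
  unfold empiricalPMF at hx ⊢
  rw [div_le_div_iff₀ hm' hm']
  have hk : (Finset.univ.filter (fun j => d j = x)).card ≠ 0 := by
    intro h
    rw [h] at hx
    simp at hx
  have : (1:ℝ) ≤ (Finset.univ.filter (fun j => d j = x)).card := by
    exact_mod_cast Nat.one_le_iff_ne_zero.mpr hk
  nlinarith

/-- for any classifier on a finite product input space and the
empirical distribution of a nonempty dataset of `m` points, every value of the
global contrastive value function is either `0` or at least `1/m²`. -/
theorem vgCon_empirical_zero_or_ge {n : ℕ} {X : Fin n → Type*}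
    [∀ i, Fintype (X i)] [∀ i, Nonempty (X i)]
    {C : Type*} [Fintype C] [Nonempty C]
    (f : (∀ i, X i) → C) {m : ℕ} (hm : 0 < m) (d : Fin m → (∀ i, X i))
    (S : Finset (Fin n)) :
    vgCon f (empiricalPMF d) S = 0 ∨
      1 / (m : ℝ) ^ 2 ≤ vgCon f (empiricalPMF d) S := by
  classical
  have hm' : (0:ℝ) < m := by exact_mod_cast hm
  have hP0 : ∀ x : ∀ i, X i, 0 ≤ empiricalPMF d x := fun x =>
    div_nonneg (by positivity) (by positivity)
  have hcond0 : ∀ (A B : (∀ i, X i) → Prop), 0 ≤ condPr (empiricalPMF d) A B := by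
    intro A B
    apply div_nonneg <;>
      exact Finset.sum_nonneg fun z _ => by split <;> simp [hP0 z]
  have hterm0 : ∀ x, 0 ≤ empiricalPMF d x * condPr (empiricalPMF d)
      (fun z => f z ≠ f x) (fun z => ∀ i ∈ Sᶜ, z i = x i) :=
    fun x => mul_nonneg (hP0 x) (hcond0 _ _)
  by_cases hz : ∀ x ∈ Finset.univ.filter (fun x => 0 < empiricalPMF d x),
      empiricalPMF d x * condPr (empiricalPMF d) (fun z => f z ≠ f x)
        (fun z => ∀ i ∈ Sᶜ, z i = x i) = 0
  · left
    exact Finset.sum_eq_zero hz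
  · right
    push_neg at hz
    obtain ⟨x, hxmem, hxne⟩ := hz
    have hxP : 0 < empiricalPMF d x := (Finset.mem_filter.mp hxmem).2
    have hcondnz : condPr (empiricalPMF d) (fun z => f z ≠ f x)
        (fun z => ∀ i ∈ Sᶜ, z i = x i) ≠ 0 := fun h =>
      hxne (by rw [h, mul_zero])
    have hcond := condPr_empirical_bound hm d (fun z => f z ≠ f x)
      (fun z => ∀ i ∈ Sᶜ, z i = x i) hcondnz
    have hPx := empiricalPMF_pos_bound hm d x hxP
    have hterm : 1 / (m:ℝ)^2 ≤ empiricalPMF d x * condPr (empiricalPMF d)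
        (fun z => f z ≠ f x) (fun z => ∀ i ∈ Sᶜ, z i = x i) := by
      have h := mul_le_mul hPx hcond (by positivity) (hP0 x)
      calc 1 / (m:ℝ)^2 = (1/(m:ℝ)) * (1/(m:ℝ)) := by ring
        _ ≤ _ := h
    calc 1 / (m:ℝ)^2
        ≤ empiricalPMF d x * condPr (empiricalPMF d)
            (fun z => f z ≠ f x) (fun z => ∀ i ∈ Sᶜ, z i = x i) := hterm
      _ ≤ vgCon f (empiricalPMF d) S :=
        Finset.single_le_sum (fun y _ => hterm0 y) hxmem
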